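/- Let I_1,…,I_d be finite sets, Φ ⊆ I_1×⋯×I_d a nonempty subset, and θ ∈ ℝ_{≥0}^d with θ_1+⋯+θ_d = 1. For a probability distribution P on Φ, define h_P(α) = Σ_{κ=1}^d θ_κ·log₂(1/P_κ(α_κ)) for α ∈ Φ, with the conventions that a term with θ_κ = 0 equals 0 and a term with θ_κ > 0 and P_κ(α_κ) = 0 equals +∞. Then P maximizes the function Q ↦ Σ_{κ=1}^d θ_κ·H(Q_κ) over all probability distributions Q on Φ if and only if every α ∈ Φ with P(α) > 0 satisfies h_P(α) ≥ h_P(β) for all β ∈ Φ. -/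

import Mathlib

open scoped BigOperators

namespace Paper

/-- Base-2 Shannon entropy of a finitely supported distribution. -/
noncomputable def entropy {ι : Type*} [Fintype ι] (Q : ι → ℝ) : ℝ :=
  ∑ x, -(Q x * Real.logb 2 (Q x))

/-- The marginal of a distribution on `∏ κ, ι κ` at coordinate `κ`. -/
noncomputable def marg {d : ℕ} (ι : Fin d → Type) [∀ κ, Fintype (ι κ)]
    [∀ κ, DecidableEq (ι κ)] (P : ((κ : Fin d) → ι κ) → ℝ) (κ : Fin d) (i : ι κ) : ℝ :=
  ∑ α : (κ' : Fin d) → ι κ', if α κ = i then P α else 0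

/-- `h_P(α) = ∑ κ, θ_κ · log₂(1/P_κ(α_κ))`, valued in `EReal`, with the conventions that a
term with `θ_κ = 0` is `0` and a term with `θ_κ ≠ 0` and `P_κ(α_κ) = 0` is `+∞`. -/
noncomputable def hFun {d : ℕ} (ι : Fin d → Type) [∀ κ, Fintype (ι κ)]
    [∀ κ, DecidableEq (ι κ)] (θ : Fin d → ℝ) (P : ((κ : Fin d) → ι κ) → ℝ)
    (α : (κ : Fin d) → ι κ) : EReal :=
  ∑ κ, if θ κ = 0 then (0 : EReal)
    else if marg ι P κ (α κ) = 0 then (⊤ : EReal)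
    else ((θ κ * Real.logb 2 (1 / marg ι P κ (α κ)) : ℝ) : EReal)

variable {d : ℕ} (ι : Fin d → Type) [∀ κ, Fintype (ι κ)] [∀ κ, DecidableEq (ι κ)]

lemma coe_sum {s : Finset (Fin d)} (f : Fin d → ℝ) :
    ((∑ i ∈ s, f i : ℝ) : EReal) = ∑ i ∈ s, (f i : EReal) := by
  induction s using Finset.cons_induction with
  | empty => simp
  | cons a s ha ih => rw [Finset.sum_cons, Finset.sum_cons, EReal.coe_add, ih]

lemma marg_nonneg {P : ((κ : Fin d) → ι κ) → ℝ} (hP0 : ∀ α, 0 ≤ P α) (κ : Fin d) (i : ι κ) :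
    0 ≤ marg ι P κ i := by
  refine Finset.sum_nonneg fun α _ => ?_
  split <;> simp [hP0 α]

lemma marg_sum (P : ((κ : Fin d) → ι κ) → ℝ) (κ : Fin d) :
    ∑ i, marg ι P κ i = ∑ α, P α := by
  unfold marg
  rw [Finset.sum_comm]
  refine Finset.sum_congr rfl fun α _ => ?_
  simp [marg, Finset.sum_ite_eq' Finset.univ (α κ) (fun _ => P α)]

lemma marg_le_one {P : ((κ : Fin d) → ι κ) → ℝ} (hP0 : ∀ α, 0 ≤ P α) (hP1 : ∑ α, P α = 1)
    (κ : Fin d) (i : ι κ) : marg ι P κ i ≤ 1 := by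
  calc marg ι P κ i ≤ ∑ j, marg ι P κ j :=
        Finset.single_le_sum (fun j _ => marg_nonneg ι hP0 κ j) (Finset.mem_univ i)
    _ = 1 := by rw [marg_sum ι P κ, hP1]

lemma le_marg {P : ((κ : Fin d) → ι κ) → ℝ} (hP0 : ∀ α, 0 ≤ P α) (κ : Fin d)
    (α : (κ : Fin d) → ι κ) : P α ≤ marg ι P κ (α κ) := by
  have := Finset.single_le_sum (f := fun β : (κ' : Fin d) → ι κ' => if β κ = α κ then P β else 0)
    (fun β _ => by split <;> simp [hP0 β]) (Finset.mem_univ α)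
  simpa [marg] using this

lemma marg_regroup (P : ((κ : Fin d) → ι κ) → ℝ) (κ : Fin d) (f : ι κ → ℝ) :
    ∑ i, marg ι P κ i * f i = ∑ α, P α * f (α κ) := by
  unfold marg
  simp_rw [Finset.sum_mul]
  rw [Finset.sum_comm]
  refine Finset.sum_congr rfl fun α _ => ?_
  rw [show P α * f (α κ) = ∑ i, if i = α κ then P α * f i else 0 by
    simp [Finset.sum_ite_eq' Finset.univ (α κ) (fun i => P α * f i)]]
  refine Finset.sum_congr rfl fun i _ => ?_
  by_cases h : α κ = i
  · subst h; simp
  · simp [h, Ne.symm h]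

lemma entropy_marg (P : ((κ : Fin d) → ι κ) → ℝ) (κ : Fin d) :
    entropy (marg ι P κ) = ∑ α, P α * (-Real.logb 2 (marg ι P κ (α κ))) := by
  rw [entropy, ← marg_regroup ι P κ (fun i => -Real.logb 2 (marg ι P κ i))]
  refine Finset.sum_congr rfl fun i _ => by ring

lemma marg_eq_zero {P : ((κ : Fin d) → ι κ) → ℝ} (hP0 : ∀ α, 0 ≤ P α) {κ : Fin d} {i : ι κ}
    (h : marg ι P κ i = 0) (α : (κ : Fin d) → ι κ) (hα : α κ = i) : P α = 0 := by
  have h2 := le_marg ι hP0 κ α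
  rw [hα, h] at h2
  exact le_antisymm h2 (hP0 α)


lemma gibbs {ιk : Type*} [Fintype ιk] (q p : ιk → ℝ) (hq0 : ∀ i, 0 ≤ q i) (hp0 : ∀ i, 0 ≤ p i)
    (hsupp : ∀ i, q i ≠ 0 → p i ≠ 0) (hsum : ∑ i, p i ≤ ∑ i, q i) :
    entropy q ≤ ∑ i, q i * (-Real.logb 2 (p i)) := by
  have hlog2 : (0:ℝ) < Real.log 2 := Real.log_pos one_lt_two
  rw [entropy, ← sub_nonpos]
  have key : ∀ i, -(q i * Real.logb 2 (q i)) - q i * (-Real.logb 2 (p i))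
      ≤ (p i - q i) / Real.log 2 := by
    intro i
    rcases eq_or_lt_of_le (hq0 i) with h | h
    · rw [← h]; simp
      exact div_nonneg (hp0 i) (Real.log_pos one_lt_two).le
    · have hp : 0 < p i := lt_of_le_of_ne (hp0 i) (Ne.symm (hsupp i (ne_of_gt h)))
      have : -(q i * Real.logb 2 (q i)) - q i * (-Real.logb 2 (p i))
          = q i * Real.logb 2 (p i / q i) := by
        rw [Real.logb_div (ne_of_gt hp) (ne_of_gt h)]; ring
      rw [this, Real.logb, mul_div_assoc']
      rw [div_le_div_iff_of_pos_right hlog2]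
      have hle := Real.log_le_sub_one_of_pos (div_pos hp h)
      calc q i * Real.log (p i / q i) ≤ q i * (p i / q i - 1) :=
            mul_le_mul_of_nonneg_left hle h.le
        _ = p i - q i := by field_simp
  calc (∑ x, -(q x * Real.logb 2 (q x))) - ∑ i, q i * (-Real.logb 2 (p i))
      = ∑ i, (-(q i * Real.logb 2 (q i)) - q i * (-Real.logb 2 (p i))) := by
        rw [Finset.sum_sub_distrib]
    _ ≤ ∑ i, (p i - q i) / Real.log 2 := Finset.sum_le_sum fun i _ => key i
    _ = ((∑ i, p i) - ∑ i, q i) / Real.log 2 := by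
        rw [← Finset.sum_div, Finset.sum_sub_distrib]
    _ ≤ 0 := by
        apply div_nonpos_of_nonpos_of_nonneg (by linarith) hlog2.le

noncomputable def hreal (θ : Fin d → ℝ) (P : ((κ : Fin d) → ι κ) → ℝ)
    (α : (κ : Fin d) → ι κ) : ℝ :=
  ∑ κ, θ κ * (-Real.logb 2 (marg ι P κ (α κ)))

lemma hFun_eq_coe {θ : Fin d → ℝ} {P : ((κ : Fin d) → ι κ) → ℝ} {α : (κ : Fin d) → ι κ}
    (h : ∀ κ, θ κ ≠ 0 → marg ι P κ (α κ) ≠ 0) :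
    hFun ι θ P α = ((hreal ι θ P α : ℝ) : EReal) := by
  rw [hFun, hreal, coe_sum]
  refine Finset.sum_congr rfl fun κ _ => ?_
  by_cases hθ : θ κ = 0
  · simp [hθ]
  · rw [if_neg hθ, if_neg (h κ hθ), one_div, Real.logb_inv]

lemma hFun_eq_top {θ : Fin d → ℝ} {P : ((κ : Fin d) → ι κ) → ℝ} {α : (κ : Fin d) → ι κ}
    (hθ0 : ∀ κ, 0 ≤ θ κ) (hP0 : ∀ γ, 0 ≤ P γ) (hP1 : ∑ γ, P γ = 1)
    {κ0 : Fin d} (hκθ : θ κ0 ≠ 0) (hκm : marg ι P κ0 (α κ0) = 0) :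
    hFun ι θ P α = ⊤ := by
  have hterm : ∀ κ : Fin d, (0:EReal) ≤ (if θ κ = 0 then (0 : EReal)
      else if marg ι P κ (α κ) = 0 then (⊤ : EReal)
      else ((θ κ * Real.logb 2 (1 / marg ι P κ (α κ)) : ℝ) : EReal)) := by
    intro κ
    by_cases h1 : θ κ = 0
    · simp [h1]
    · rw [if_neg h1]
      by_cases h2 : marg ι P κ (α κ) = 0
      · simp [h2]
      · rw [if_neg h2]
        have hm : 0 < marg ι P κ (α κ) :=
          lt_of_le_of_ne (marg_nonneg ι hP0 κ (α κ)) (Ne.symm h2)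
        have h1m : 1 ≤ 1 / marg ι P κ (α κ) :=
          by
          rw [le_div_iff₀ hm, one_mul]
          exact marg_le_one ι hP0 hP1 κ (α κ)
        have : (0:ℝ) ≤ θ κ * Real.logb 2 (1 / marg ι P κ (α κ)) :=
          mul_nonneg (hθ0 κ) (Real.logb_nonneg one_lt_two h1m)
        exact_mod_cast this
  rw [hFun, ← Finset.add_sum_erase _ _ (Finset.mem_univ κ0), if_neg hκθ, if_pos hκm]
  refine EReal.top_add_of_ne_bot ?_
  intro hbot
  have : (0:EReal) ≤ ∑ κ ∈ Finset.univ.erase κ0,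
      (if θ κ = 0 then (0 : EReal)
      else if marg ι P κ (α κ) = 0 then (⊤ : EReal)
      else ((θ κ * Real.logb 2 (1 / marg ι P κ (α κ)) : ℝ) : EReal)) :=
    Finset.sum_nonneg fun κ _ => hterm κ
  rw [hbot] at this
  exact absurd this (by simp)



noncomputable def eta (x : ℝ) : ℝ := Real.negMulLog x / Real.log 2

lemma eta_eq (x : ℝ) : -(x * Real.logb 2 x) = eta x := by
  rw [eta, Real.negMulLog, Real.logb]; ring

lemma continuous_eta : Continuous eta := Real.continuous_negMulLog.div_const _

lemma hasDerivAt_delta {p q : ℝ} (hp : 0 ≤ p) {t : ℝ} (ht : 0 < t) (htq : t < q) :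
    HasDerivAt (fun s => eta (p + s) - eta p + eta (q - s) - eta q)
      (Real.logb 2 (q - t) - Real.logb 2 (p + t)) t := by
  have h1 : HasDerivAt (fun s : ℝ => eta (p + s))
      ((-Real.log (p + t) - 1) / Real.log 2) t := by
    have hinner : HasDerivAt (fun s : ℝ => p + s) 1 t := (hasDerivAt_id t).const_add p
    have houter := Real.hasDerivAt_negMulLog (x := p + t) (by positivity)
    have := (houter.comp t hinner)
    simpa [eta, mul_one] using this.div_const (Real.log 2)
  have h2 : HasDerivAt (fun s : ℝ => eta (q - s))
      ((Real.log (q - t) + 1) / Real.log 2) t := by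
    have hinner : HasDerivAt (fun s : ℝ => q - s) (-1) t := by
      simpa using (hasDerivAt_id t).const_sub q
    have houter := Real.hasDerivAt_negMulLog (x := q - t) (ne_of_gt (by linarith))
    have h := (houter.comp t hinner).div_const (Real.log 2)
    have h' : HasDerivAt (fun s : ℝ => eta (q - s))
        ((-Real.log (q - t) - 1) * -1 / Real.log 2) t := h
    convert h' using 1
    ring
  have := ((h1.sub_const (eta p)).fun_add h2).sub_const (eta q)
  refine this.congr_deriv ?_
  rw [Real.logb, Real.logb]
  field_simp
  ring


lemma continuousAt_finset_sum' {X : Type*} [TopologicalSpace X] {f : Fin d → X → ℝ} {x : X}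
    (h : ∀ κ, ContinuousAt (f κ) x) : ContinuousAt (fun y => ∑ κ, f κ y) x := by
  have : Filter.Tendsto (fun y => ∑ κ, f κ y) (nhds x) (nhds (∑ κ, f κ x)) :=
    tendsto_finset_sum _ (fun κ _ => h κ)
  exact this

/-- a distribution `P` on `Φ` maximizes the `θ`-weighted marginal entropy
`Q ↦ ∑ κ, θ_κ·H(Q_κ)` over all distributions on `Φ` iff every point of positive `P`-probability
is a maximizer of `h_P` on `Φ`. -/
theorem statement15 {d : ℕ} (ι : Fin d → Type) [∀ κ, Fintype (ι κ)] [∀ κ, DecidableEq (ι κ)]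
    (Φ : Set ((κ : Fin d) → ι κ)) (hΦ : Φ.Nonempty)
    (θ : Fin d → ℝ) (hθ0 : ∀ κ, 0 ≤ θ κ) (hθ1 : ∑ κ, θ κ = 1)
    (P : ((κ : Fin d) → ι κ) → ℝ) (hP0 : ∀ α, 0 ≤ P α) (hP1 : ∑ α, P α = 1)
    (hPsupp : ∀ α, P α ≠ 0 → α ∈ Φ) :
    (∀ Q : ((κ : Fin d) → ι κ) → ℝ, (∀ α, 0 ≤ Q α) → (∑ α, Q α) = 1 →
        (∀ α, Q α ≠ 0 → α ∈ Φ) →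
        ∑ κ, θ κ * entropy (marg ι Q κ) ≤ ∑ κ, θ κ * entropy (marg ι P κ))
      ↔ (∀ α ∈ Φ, 0 < P α → ∀ β ∈ Φ, hFun ι θ P β ≤ hFun ι θ P α) := by
  constructor
  · intro hmax α hαΦ hαpos β hβΦ
    by_contra hnle
    have hlt : hFun ι θ P α < hFun ι θ P β := not_le.mp hnle
    have hαβ : α ≠ β := fun h => absurd hlt (by rw [h]; exact lt_irrefl _)
    obtain ⟨pp, hpp⟩ : ∃ pp : Fin d → ℝ, pp = fun κ => marg ι P κ (β κ) := ⟨_, rfl⟩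
    obtain ⟨qq, hqq⟩ : ∃ qq : Fin d → ℝ, qq = fun κ => marg ι P κ (α κ) := ⟨_, rfl⟩
    have hqqpos : ∀ κ, 0 < qq κ := fun κ => by
      rw [hqq]; exact lt_of_lt_of_le hαpos (le_marg ι hP0 κ α)
    have hqqα : ∀ κ, P α ≤ qq κ := fun κ => by rw [hqq]; exact le_marg ι hP0 κ α
    have hpp0 : ∀ κ, 0 ≤ pp κ := fun κ => by rw [hpp]; exact marg_nonneg ι hP0 κ (β κ)
    have hfα : hFun ι θ P α = ((hreal ι θ P α : ℝ) : EReal) :=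
      hFun_eq_coe ι fun κ _ => ne_of_gt (by
        have := hqqpos κ; rw [hqq] at this; exact this)
    obtain ⟨Qf, hQf⟩ : ∃ Qf : ℝ → ((κ : Fin d) → ι κ) → ℝ,
        Qf = fun t γ => P γ + (if γ = β then t else 0) - (if γ = α then t else 0) := ⟨_, rfl⟩
    obtain ⟨g, hg⟩ : ∃ g : ℝ → ℝ, g = fun t => ∑ κ, θ κ * (if β κ = α κ then 0 else
        (eta (pp κ + t) - eta (pp κ) + eta (qq κ - t) - eta (qq κ))) := ⟨_, rfl⟩
    obtain ⟨φ, hφ⟩ : ∃ φ : ℝ → ℝ, φ = fun t => ∑ κ, (if θ κ = 0 ∨ β κ = α κ then 0 else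
        θ κ * (Real.logb 2 (qq κ - t) - Real.logb 2 (pp κ + t))) := ⟨_, rfl⟩
    -- marginals of the perturbed distribution
    have hmargQ : ∀ (t : ℝ) (κ : Fin d) (i : ι κ), marg ι (Qf t) κ i
        = marg ι P κ i + (if β κ = i then t else 0) - (if α κ = i then t else 0) := by
      intro t κ i
      rw [hQf]
      unfold marg
      dsimp only
      have hsplit : ∀ γ : (κ' : Fin d) → ι κ',
          (if γ κ = i then P γ + (if γ = β then t else 0) - (if γ = α then t else 0) else 0)
          = (if γ κ = i then P γ else 0) + (if γ κ = i then (if γ = β then t else 0) else 0)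
            - (if γ κ = i then (if γ = α then t else 0) else 0) := by
        intro γ; by_cases h : γ κ = i <;> simp [h]
      simp_rw [hsplit]
      rw [Finset.sum_sub_distrib, Finset.sum_add_distrib]
      have hβsum : ∑ γ : (κ' : Fin d) → ι κ',
          (if γ κ = i then (if γ = β then t else 0) else 0) = (if β κ = i then t else 0) := by
        rw [Finset.sum_eq_single_of_mem β (Finset.mem_univ β) (fun γ _ hγ => by simp [hγ])]
        by_cases h : β κ = i <;> simp [h]
      have hαsum : ∑ γ : (κ' : Fin d) → ι κ',
          (if γ κ = i then (if γ = α then t else 0) else 0) = (if α κ = i then t else 0) := by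
        rw [Finset.sum_eq_single_of_mem α (Finset.mem_univ α) (fun γ _ hγ => by simp [hγ])]
        by_cases h : α κ = i <;> simp [h]
      rw [hβsum, hαsum]
    -- the perturbed objective value
    have hperturb : ∀ t : ℝ, ∑ κ, θ κ * entropy (marg ι (Qf t) κ)
        = ∑ κ, θ κ * entropy (marg ι P κ) + g t := by
      intro t
      rw [hg, ← Finset.sum_add_distrib]
      refine Finset.sum_congr rfl fun κ _ => ?_
      rw [← mul_add]
      congr 1
      by_cases hb : β κ = α κ
      · rw [if_pos hb, add_zero]
        unfold entropy
        refine Finset.sum_congr rfl fun i _ => ?_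
        rw [hmargQ t κ i, hb, add_sub_cancel_right]
      · rw [if_neg hb]
        have hβt : marg ι (Qf t) κ (β κ) = pp κ + t := by
          rw [hmargQ t κ (β κ), if_pos rfl, if_neg (fun h => hb h.symm), hpp]
          simp
        have hαt : marg ι (Qf t) κ (α κ) = qq κ - t := by
          rw [hmargQ t κ (α κ), if_neg hb, if_pos rfl, hqq]
          simp
        have e1 : entropy (marg ι (Qf t) κ) - entropy (marg ι P κ)
            = ∑ i, (eta (marg ι (Qf t) κ i) - eta (marg ι P κ i)) := by
          simp only [entropy, eta_eq]
          rw [Finset.sum_sub_distrib]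
        have hzero : ∀ i ∈ Finset.univ, i ∉ ({β κ, α κ} : Finset (ι κ)) →
            eta (marg ι (Qf t) κ i) - eta (marg ι P κ i) = 0 := by
          intro i _ hi
          rw [Finset.mem_insert, Finset.mem_singleton] at hi
          push_neg at hi
          rw [hmargQ t κ i, if_neg (fun h => hi.1 h.symm), if_neg (fun h => hi.2 h.symm)]
          simp
        have hsum2 : ∑ i, (eta (marg ι (Qf t) κ i) - eta (marg ι P κ i))
            = ∑ i ∈ ({β κ, α κ} : Finset (ι κ)),
                (eta (marg ι (Qf t) κ i) - eta (marg ι P κ i)) :=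
          (Finset.sum_subset (Finset.subset_univ _) hzero).symm
        rw [hsum2, Finset.sum_pair hb, hβt, hαt] at e1
        have hppκ : marg ι P κ (β κ) = pp κ := by rw [hpp]
        have hqqκ : marg ι P κ (α κ) = qq κ := by rw [hqq]
        rw [hppκ, hqqκ] at e1
        linarith
    -- derivative of g
    have hgderiv : ∀ t ∈ Set.Ioo (0:ℝ) (P α), HasDerivAt g (φ t) t := by
      intro t ht
      rw [hg, hφ]
      refine HasDerivAt.fun_sum fun κ _ => ?_
      by_cases hb : β κ = α κ
      · rw [if_pos (Or.inr hb)]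
        simp only [if_pos hb, mul_zero]
        exact hasDerivAt_const t 0
      · by_cases hθz : θ κ = 0
        · rw [if_pos (Or.inl hθz), hθz]
          simp only [zero_mul]
          exact hasDerivAt_const t 0
        · rw [if_neg (by tauto)]
          simp only [if_neg hb]
          exact (hasDerivAt_delta (hpp0 κ) ht.1 (lt_of_lt_of_le ht.2 (hqqα κ))).const_mul (θ κ)
    -- continuity of g
    have hgcont : Continuous g := by
      rw [hg]
      refine continuous_finset_sum _ fun κ _ => ?_
      by_cases hb : β κ = α κ
      · simp only [if_pos hb, mul_zero]
        exact continuous_const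
      · simp only [if_neg hb]
        refine continuous_const.mul ?_
        exact (((continuous_eta.comp (continuous_const.add continuous_id)).sub
          continuous_const).add
          (continuous_eta.comp (continuous_const.sub continuous_id))).sub continuous_const
    have hg0 : g 0 = 0 := by
      rw [hg]
      refine Finset.sum_eq_zero fun κ _ => ?_
      by_cases hb : β κ = α κ
      · simp [hb]
      · simp only [if_neg hb, add_zero, sub_zero]
        ring
    -- positivity of φ near zero
    have hkey : ∃ δ : ℝ, 0 < δ ∧ δ ≤ P α ∧ ∀ t, 0 < t → t < δ → 0 < φ t := by
      by_cases hA : ∃ κ0, θ κ0 ≠ 0 ∧ pp κ0 = 0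
      · -- case A : infinite h_P(β)
        obtain ⟨κ0, hκθ, hκp⟩ := hA
        have hbκ0 : ¬ (β κ0 = α κ0) := by
          intro h
          have : pp κ0 = qq κ0 := by rw [hpp, hqq]; dsimp only; rw [h]
          rw [hκp] at this
          exact absurd this.symm (ne_of_gt (hqqpos κ0))
        have hθκ0pos : 0 < θ κ0 := lt_of_le_of_ne (hθ0 κ0) (Ne.symm hκθ)
        obtain ⟨ψ, hψ⟩ : ∃ ψ : Fin d → ℝ, ψ = fun κ => if θ κ = 0 ∨ β κ = α κ then 0
            else if pp κ = 0 then 0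
            else θ κ * (Real.logb 2 (P α / 2) - Real.logb 2 (pp κ + 1)) := ⟨_, rfl⟩
        obtain ⟨C, hC⟩ : ∃ C : ℝ, C = ∑ κ ∈ Finset.univ.erase κ0, ψ κ := ⟨_, rfl⟩
        obtain ⟨c, hc⟩ : ∃ c : ℝ, c = Real.logb 2 (P α / 2) + C / θ κ0 := ⟨_, rfl⟩
        refine ⟨min (min (P α / 2) 1) ((2:ℝ) ^ c), ?_, ?_, ?_⟩
        · exact lt_min (lt_min (by linarith) one_pos) (Real.rpow_pos_of_pos two_pos c)
        · calc min (min (P α / 2) 1) ((2:ℝ) ^ c) ≤ min (P α / 2) 1 := min_le_left _ _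
            _ ≤ P α / 2 := min_le_left _ _
            _ ≤ P α := by linarith
        · intro t ht0 htδ
          have ht1 : t < P α / 2 :=
            lt_of_lt_of_le htδ (le_trans (min_le_left _ _) (min_le_left _ _))
          have ht2 : t ≤ 1 :=
            le_of_lt (lt_of_lt_of_le htδ (le_trans (min_le_left _ _) (min_le_right _ _)))
          have ht3 : t < (2:ℝ) ^ c := lt_of_lt_of_le htδ (min_le_right _ _)
          have hlogt : Real.logb 2 t < c := (Real.logb_lt_iff_lt_rpow one_lt_two ht0).mpr ht3
          have hterm0 : θ κ0 * (Real.logb 2 (P α / 2) - Real.logb 2 t)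
              ≤ (if θ κ0 = 0 ∨ β κ0 = α κ0 then 0
                else θ κ0 * (Real.logb 2 (qq κ0 - t) - Real.logb 2 (pp κ0 + t))) := by
            rw [if_neg (by tauto), hκp, zero_add]
            refine mul_le_mul_of_nonneg_left ?_ (hθ0 κ0)
            refine sub_le_sub_right ?_ _
            rw [Real.logb_le_logb one_lt_two (by linarith) (by
              have := hqqα κ0; linarith)]
            have := hqqα κ0; linarith
          have hrest : C ≤ ∑ κ ∈ Finset.univ.erase κ0,
              (if θ κ = 0 ∨ β κ = α κ then 0
                else θ κ * (Real.logb 2 (qq κ - t) - Real.logb 2 (pp κ + t))) := by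
            rw [hC]
            refine Finset.sum_le_sum fun κ _ => ?_
            rw [hψ]
            dsimp only
            by_cases h1 : θ κ = 0 ∨ β κ = α κ
            · rw [if_pos h1, if_pos h1]
            · rw [if_neg h1, if_neg h1]
              have hqκ := hqqα κ
              by_cases h2 : pp κ = 0
              · rw [if_pos h2]
                refine mul_nonneg (hθ0 κ) ?_
                rw [h2, zero_add, sub_nonneg,
                  Real.logb_le_logb one_lt_two ht0 (by linarith)]
                linarith
              · rw [if_neg h2]
                have hppκpos : 0 < pp κ := lt_of_le_of_ne (hpp0 κ) (Ne.symm h2)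
                refine mul_le_mul_of_nonneg_left ?_ (hθ0 κ)
                refine sub_le_sub ?_ ?_
                · rw [Real.logb_le_logb one_lt_two (by linarith) (by linarith)]
                  linarith
                · rw [Real.logb_le_logb one_lt_two (by linarith) (by linarith)]
                  linarith
          have hsplit : φ t = (if θ κ0 = 0 ∨ β κ0 = α κ0 then 0
              else θ κ0 * (Real.logb 2 (qq κ0 - t) - Real.logb 2 (pp κ0 + t)))
              + ∑ κ ∈ Finset.univ.erase κ0,
                (if θ κ = 0 ∨ β κ = α κ then 0
                  else θ κ * (Real.logb 2 (qq κ - t) - Real.logb 2 (pp κ + t))) := by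
            rw [hφ]
            exact (Finset.add_sum_erase _ _ (Finset.mem_univ κ0)).symm
          have hfinal : 0 < θ κ0 * (Real.logb 2 (P α / 2) - Real.logb 2 t) + C := by
            have hcc : θ κ0 * (Real.logb 2 (P α / 2) - Real.logb 2 t) + C
                = θ κ0 * (c - Real.logb 2 t) := by
              rw [hc]
              field_simp
              ring
            rw [hcc]
            exact mul_pos hθκ0pos (by linarith)
          rw [hsplit]
          linarith
      · -- case B : finite h_P(β)
        push_neg at hA
        have hfβ : hFun ι θ P β = ((hreal ι θ P β : ℝ) : EReal) :=
          hFun_eq_coe ι fun κ hκ => by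
            have := hA κ hκ; rw [hpp] at this; exact this
        have hrlt : hreal ι θ P α < hreal ι θ P β := by
          rw [hfα, hfβ] at hlt
          exact_mod_cast hlt
        have hφ0 : φ 0 = hreal ι θ P β - hreal ι θ P α := by
          rw [hφ, hreal, hreal, ← Finset.sum_sub_distrib]
          refine Finset.sum_congr rfl fun κ _ => ?_
          by_cases hθz : θ κ = 0
          · rw [if_pos (Or.inl hθz), hθz]
            ring
          · by_cases hb : β κ = α κ
            · rw [if_pos (Or.inr hb), hb]
              ring
            · rw [if_neg (by tauto), hpp, hqq]
              dsimp only
              rw [sub_zero, add_zero]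
              ring
        have hφcont : ContinuousAt φ 0 := by
          rw [hφ]
          refine continuousAt_finset_sum' (f := fun κ t => (if θ κ = 0 ∨ β κ = α κ then 0 else
            θ κ * (Real.logb 2 (qq κ - t) - Real.logb 2 (pp κ + t)))) (x := 0) ?_
          intro κ
          by_cases h1 : θ κ = 0 ∨ β κ = α κ
          · simp only [if_pos h1]
            exact continuousAt_const
          · simp only [if_neg h1]
            have hθz : θ κ ≠ 0 := fun h => h1 (Or.inl h)
            have hppκpos : 0 < pp κ := by
              have := hA κ hθz
              rw [hpp] at this ⊢
              exact lt_of_le_of_ne (marg_nonneg ι hP0 κ (β κ)) (Ne.symm this)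
            have hin1 : ContinuousAt (fun t : ℝ => qq κ - t) 0 :=
              (continuous_const.sub continuous_id).continuousAt
            have hout1 : ContinuousAt (Real.logb 2) ((fun t : ℝ => qq κ - t) 0) :=
              Real.continuousAt_logb (by simpa using ne_of_gt (hqqpos κ))
            have hin2 : ContinuousAt (fun t : ℝ => pp κ + t) 0 :=
              (continuous_const.add continuous_id).continuousAt
            have hout2 : ContinuousAt (Real.logb 2) ((fun t : ℝ => pp κ + t) 0) :=
              Real.continuousAt_logb (by simpa using ne_of_gt hppκpos)
            exact continuousAt_const.mul ((hout1.comp hin1).sub (hout2.comp hin2))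
        have hev : ∀ᶠ t in nhds (0:ℝ), 0 < φ t := by
          have hpos : (0:ℝ) < φ 0 := by rw [hφ0]; linarith
          exact hφcont.eventually (eventually_gt_nhds hpos)
        obtain ⟨ε, hεpos, hε⟩ := Metric.eventually_nhds_iff.mp hev
        refine ⟨min ε (P α), lt_min hεpos hαpos, min_le_right _ _, fun t ht1 ht2 => ?_⟩
        refine hε ?_
        rw [Real.dist_eq, sub_zero, abs_of_pos ht1]
        exact lt_of_lt_of_le ht2 (min_le_left _ _)
    obtain ⟨δ, hδpos, hδle, hδφ⟩ := hkey
    have hτpos : 0 < δ / 2 := by linarith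
    have hτδ : δ / 2 < δ := by linarith
    have hτα : δ / 2 < P α := lt_of_lt_of_le hτδ hδle
    have hmono : StrictMonoOn g (Set.Icc 0 (δ / 2)) := by
      refine strictMonoOn_of_deriv_pos (convex_Icc 0 (δ / 2)) hgcont.continuousOn ?_
      intro x hx
      rw [interior_Icc] at hx
      rw [(hgderiv x ⟨hx.1, lt_trans hx.2 hτα⟩).deriv]
      exact hδφ x hx.1 (lt_trans hx.2 hτδ)
    have hgτ : 0 < g (δ / 2) := by
      have := hmono (Set.left_mem_Icc.mpr hτpos.le) (Set.right_mem_Icc.mpr hτpos.le) hτpos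
      rwa [hg0] at this
    have hQ0' : ∀ γ, 0 ≤ Qf (δ / 2) γ := by
      intro γ
      rw [hQf]
      dsimp only
      by_cases h1 : γ = β
      · rw [if_pos h1, if_neg (by rw [h1]; exact fun h => hαβ h.symm)]
        have := hP0 γ
        linarith
      · rw [if_neg h1]
        by_cases h2 : γ = α
        · rw [if_pos h2, h2]
          linarith
        · rw [if_neg h2]
          have := hP0 γ
          linarith
    have hQ1' : ∑ γ, Qf (δ / 2) γ = 1 := by
      rw [hQf]
      dsimp only
      rw [Finset.sum_sub_distrib, Finset.sum_add_distrib, hP1,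
        Finset.sum_ite_eq' Finset.univ β (fun _ => δ / 2),
        Finset.sum_ite_eq' Finset.univ α (fun _ => δ / 2)]
      simp
    have hQsupp' : ∀ γ, Qf (δ / 2) γ ≠ 0 → γ ∈ Φ := by
      intro γ h
      by_cases h1 : γ = β
      · rw [h1]; exact hβΦ
      · by_cases h2 : γ = α
        · rw [h2]; exact hαΦ
        · refine hPsupp γ ?_
          rw [hQf] at h
          dsimp only at h
          rw [if_neg h1, if_neg h2] at h
          simpa using h
    have hcontr := hmax (Qf (δ / 2)) hQ0' hQ1' hQsupp'
    rw [hperturb (δ / 2)] at hcontr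
    linarith
  · intro R Q hQ0 hQ1 hQsupp
    obtain ⟨αs, hαs⟩ : ∃ α, 0 < P α := by
      by_contra h
      push_neg at h
      have : ∑ α, P α = 0 := Finset.sum_eq_zero fun α _ => le_antisymm (h α) (hP0 α)
      rw [hP1] at this
      exact one_ne_zero this
    have hαsΦ : αs ∈ Φ := hPsupp αs (ne_of_gt hαs)
    have hms : ∀ κ, marg ι P κ (αs κ) ≠ 0 := fun κ =>
      ne_of_gt (lt_of_lt_of_le hαs (le_marg ι hP0 κ αs))
    have hFs : hFun ι θ P αs = ((hreal ι θ P αs : ℝ) : EReal) :=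
      hFun_eq_coe ι (fun κ _ => hms κ)
    have hswapP : ∀ (W : ((κ : Fin d) → ι κ) → ℝ),
        ∑ κ, θ κ * (∑ γ, W γ * (-Real.logb 2 (marg ι P κ (γ κ))))
          = ∑ γ, W γ * hreal ι θ P γ := by
      intro W
      simp_rw [Finset.mul_sum]
      rw [Finset.sum_comm]
      refine Finset.sum_congr rfl fun γ _ => ?_
      rw [hreal, Finset.mul_sum]
      exact Finset.sum_congr rfl fun κ _ => by ring
    have hFP : ∑ κ, θ κ * entropy (marg ι P κ) = hreal ι θ P αs := by
      have h1 : ∑ κ, θ κ * entropy (marg ι P κ) = ∑ γ, P γ * hreal ι θ P γ := by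
        rw [← hswapP P]
        exact Finset.sum_congr rfl fun κ _ => by rw [entropy_marg ι P κ]
      rw [h1]
      have h2 : ∀ γ ∈ Finset.univ, P γ * hreal ι θ P γ = P γ * hreal ι θ P αs := by
        intro γ _
        rcases eq_or_ne (P γ) 0 with h | h
        · rw [h, zero_mul, zero_mul]
        · have hγΦ := hPsupp γ h
          have hγpos : 0 < P γ := lt_of_le_of_ne (hP0 γ) (Ne.symm h)
          have hmγ : ∀ κ, marg ι P κ (γ κ) ≠ 0 := fun κ =>
            ne_of_gt (lt_of_lt_of_le hγpos (le_marg ι hP0 κ γ))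
          have hFγ := hFun_eq_coe ι (θ := θ) (P := P) (α := γ) (fun κ _ => hmγ κ)
          have e1 := R αs hαsΦ hαs γ hγΦ
          have e2 := R γ hγΦ hγpos αs hαsΦ
          rw [hFγ, hFs] at e1 e2
          have : hreal ι θ P γ = hreal ι θ P αs :=
            le_antisymm (by exact_mod_cast e1) (by exact_mod_cast e2)
          rw [this]
      rw [Finset.sum_congr rfl h2, ← Finset.sum_mul, hP1, one_mul]
    have claim : ∀ γ, Q γ ≠ 0 → ∀ κ, θ κ ≠ 0 → marg ι P κ (γ κ) ≠ 0 := by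
      intro γ hγ κ hκ hm
      have htop := hFun_eq_top ι hθ0 hP0 hP1 hκ hm
      have hle := R αs hαsΦ hαs γ (hQsupp γ hγ)
      rw [htop, hFs] at hle
      exact (EReal.coe_lt_top (hreal ι θ P αs)).not_ge hle
    have hQme : ∀ κ ∈ Finset.univ, θ κ * entropy (marg ι Q κ)
        ≤ θ κ * (∑ γ, Q γ * (-Real.logb 2 (marg ι P κ (γ κ)))) := by
      intro κ _
      rcases eq_or_ne (θ κ) 0 with h | h
      · rw [h, zero_mul, zero_mul]
      · refine mul_le_mul_of_nonneg_left ?_ (hθ0 κ)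
        rw [← marg_regroup ι Q κ (fun i => -Real.logb 2 (marg ι P κ i))]
        refine gibbs _ _ (marg_nonneg ι hQ0 κ) (marg_nonneg ι hP0 κ) ?_ ?_
        · intro i hi
          obtain ⟨γ, -, hγ⟩ := Finset.exists_ne_zero_of_sum_ne_zero (by
            rw [marg] at hi; exact hi)
          have hγκ : γ κ = i := by
            by_contra hne
            rw [if_neg hne] at hγ
            exact hγ rfl
          rw [if_pos hγκ] at hγ
          rw [← hγκ]
          exact claim γ hγ κ h
        · rw [marg_sum, marg_sum, hP1, hQ1]
    calc ∑ κ, θ κ * entropy (marg ι Q κ)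
        ≤ ∑ κ, θ κ * (∑ γ, Q γ * (-Real.logb 2 (marg ι P κ (γ κ)))) :=
          Finset.sum_le_sum hQme
      _ = ∑ γ, Q γ * hreal ι θ P γ := hswapP Q
      _ ≤ ∑ γ, Q γ * hreal ι θ P αs := by
          refine Finset.sum_le_sum fun γ _ => ?_
          rcases eq_or_ne (Q γ) 0 with h | h
          · rw [h, zero_mul, zero_mul]
          · refine mul_le_mul_of_nonneg_left ?_ (hQ0 γ)
            have hγΦ := hQsupp γ h
            have hFγ := hFun_eq_coe ι (θ := θ) (P := P) (α := γ) (claim γ h)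
            have e1 := R αs hαsΦ hαs γ hγΦ
            rw [hFγ, hFs] at e1
            exact_mod_cast e1
      _ = hreal ι θ P αs := by rw [← Finset.sum_mul, hQ1, one_mul]
      _ = ∑ κ, θ κ * entropy (marg ι P κ) := hFP.symm

end Paper
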